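/- Let N = 2·3^m with m ≥ 2, and let k be an integer with 0 ≤ k ≤ N−1. The (k mod N)-monomial minimal solution of (E_N) is reducible if and only if k is a multiple of 3 different from 3^m, from 3^{m−1}, and from 5·3^{m−1}. -/

import Mathlib

open Matrix

/-- The elementary matrix `[[a, -1], [1, 0]]` over `ZMod N`. -/
def genMat {N : ℕ} (a : ZMod N) : Matrix (Fin 2) (Fin 2) (ZMod N) :=
  !![a, -1; 1, 0]

/-- `Mword [a₁, …, aₙ]` is the matrix `Mₙ(a₁, …, aₙ) = genMat aₙ * ⋯ * genMat a₁`. -/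
def Mword {N : ℕ} (l : List (ZMod N)) : Matrix (Fin 2) (Fin 2) (ZMod N) :=
  (l.reverse.map genMat).prod

/-- A tuple (encoded as a list) is a solution of `(E_N)` if its matrix is `±Id`. -/
def IsSolutionE {N : ℕ} (l : List (ZMod N)) : Prop :=
  Mword l = 1 ∨ Mword l = -1

/-- The size of the `k`-monomial minimal solution of `(E_N)`: the least positive `n`
such that the constant `n`-tuple `(k, …, k)` is a solution of `(E_N)`. -/
noncomputable def monomialSize (N : ℕ) (k : ZMod N) : ℕ :=
  sInf {n : ℕ | 0 < n ∧ IsSolutionE (List.replicate n k)}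

/-- The `k`-monomial minimal solution of `(E_N)`. -/
noncomputable def monoSol (N : ℕ) (k : ZMod N) : List (ZMod N) :=
  List.replicate (monomialSize N k) k

/-- The sum `⊕` of two tuples:
`(a₁,…,aₘ) ⊕ (b₁,…,bₗ) = (a₁+bₗ, a₂, …, aₘ₋₁, aₘ+b₁, b₂, …, bₗ₋₁)`. -/
def oplus {N : ℕ} (a b : List (ZMod N)) : List (ZMod N) :=
  (a.headD 0 + b.getLastD 0) ::
    ((a.drop 1).dropLast ++ (a.getLastD 0 + b.headD 0) :: (b.drop 1).dropLast)

/-- Two tuples are equivalent (`∼`) if one is obtained from the other by a cyclic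
permutation, possibly composed with order reversal. -/
def TupEquiv {N : ℕ} (c d : List (ZMod N)) : Prop :=
  (∃ i, d = c.rotate i) ∨ (∃ i, d = c.reverse.rotate i)

/-- A tuple is reducible if it is equivalent to a sum `a ⊕ b` where `b` is a solution of
`(E_N)` and both `a`, `b` have length at least `3`. -/
def IsReducibleE {N : ℕ} (c : List (ZMod N)) : Prop :=
  ∃ a b : List (ZMod N), 3 ≤ a.length ∧ 3 ≤ b.length ∧ IsSolutionE b ∧
    TupEquiv c (oplus a b)

/-- An irreducible solution of `(E_N)`: a solution of size at least `3` that is not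
reducible (the solution `(0,0)` is not considered irreducible). -/
def IsIrreducibleE {N : ℕ} (c : List (ZMod N)) : Prop :=
  IsSolutionE c ∧ 3 ≤ c.length ∧ ¬ IsReducibleE c

/-- A reducible solution of `(E_N)`: a solution that is not irreducible. -/
def IsReducibleSol {N : ℕ} (c : List (ZMod N)) : Prop :=
  IsSolutionE c ∧ ¬ IsIrreducibleE c

/-- `N` is monomially irreducible if for every nonzero `k ∈ ZMod N` the `k`-monomial
minimal solution of `(E_N)` is irreducible. -/
def MonomiallyIrreducible (N : ℕ) : Prop :=
  ∀ k : ZMod N, k ≠ 0 → IsIrreducibleE (monoSol N k)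

/-- `N` is quasi monomially irreducible if for every integer `k` coprime to `N` the
`(k mod N)`-monomial minimal solution of `(E_N)` is irreducible. -/
def QuasiMonomiallyIrreducible (N : ℕ) : Prop :=
  ∀ k : ℤ, Int.gcd k (N : ℤ) = 1 → IsIrreducibleE (monoSol N (k : ZMod N))

/-- `N` is semi monomially irreducible: if `N` is even but not divisible by `4`, this
requires that for every integer `a` coprime to `N/2` the `(2a mod N)`-monomial minimal
solution of `(E_N)` is irreducible; otherwise (i.e. `N` odd or divisible by `4`), it
requires the same for every integer `a` coprime to `N`. -/
def SemiMonomiallyIrreducible (N : ℕ) : Prop :=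
  if 2 ∣ N ∧ ¬ (4 ∣ N) then
    ∀ a : ℤ, Int.gcd a ((N / 2 : ℕ) : ℤ) = 1 →
      IsIrreducibleE (monoSol N ((2 * a : ℤ) : ZMod N))
  else
    ∀ a : ℤ, Int.gcd a (N : ℤ) = 1 →
      IsIrreducibleE (monoSol N ((2 * a : ℤ) : ZMod N))

section S1
variable {N : ℕ}

lemma Mword_nil : Mword ([] : List (ZMod N)) = 1 := by simp [Mword]

lemma Mword_cons (x : ZMod N) (l : List (ZMod N)) :
    Mword (x :: l) = Mword l * genMat x := by
  simp [Mword, List.prod_append]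

lemma Mword_concat (y : ZMod N) (l : List (ZMod N)) :
    Mword (l ++ [y]) = genMat y * Mword l := by
  simp [Mword]

lemma Mword_replicate (n : ℕ) (k : ZMod N) :
    Mword (List.replicate n k) = (genMat k) ^ n := by
  simp [Mword, List.prod_replicate]

lemma det_genMat (a : ZMod N) : (genMat a).det = 1 := by
  simp [genMat, Matrix.det_fin_two_of]

end S1
section S2
variable {N : ℕ}

lemma sandwich_eq (k x y : ZMod N) (j : ℕ) :
    Mword (x :: (List.replicate j k ++ [y])) = genMat y * (genMat k)^j * genMat x := by
  rw [Mword_cons, Mword_concat, Mword_replicate, Matrix.mul_assoc]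

lemma isSolution_sandwich (k x y : ZMod N) (j : ℕ)
    (h : IsSolutionE (x :: (List.replicate j k ++ [y]))) :
    ((genMat k)^j) 0 0 = 1 ∨ ((genMat k)^j) 0 0 = -1 := by
  set B := (genMat k)^j with hB
  have hBe : B = !![B 0 0, B 0 1; B 1 0, B 1 1] := Matrix.eta_fin_two B
  rcases h with h1 | h1 <;>
  · rw [sandwich_eq, ← hB] at h1
    have := congrArg (fun M : Matrix (Fin 2) (Fin 2) (ZMod N) => M 1 1) h1
    simp only [genMat] at this
    rw [hBe] at this
    simp [Matrix.mul_apply, Fin.sum_univ_two, Matrix.one_apply] at this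
    first
      | exact Or.inl (by linear_combination this)
      | exact Or.inl (by linear_combination -this)
      | exact Or.inr (by linear_combination this)
      | exact Or.inr (by linear_combination -this)

lemma sandwich_solution (k : ZMod N) (j : ℕ)
    (h : ((genMat k)^j) 0 0 = 1 ∨ ((genMat k)^j) 0 0 = -1) :
    ∃ x y : ZMod N, IsSolutionE (x :: (List.replicate j k ++ [y])) := by
  set B := (genMat k)^j with hB
  have hdet : B 0 0 * B 1 1 - B 0 1 * B 1 0 = 1 := by
    have : B.det = 1 := by
      rw [hB, Matrix.det_pow, det_genMat, one_pow]
    rwa [Matrix.det_fin_two] at this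
  have hBe : B = !![B 0 0, B 0 1; B 1 0, B 1 1] := Matrix.eta_fin_two B
  rcases h with h1 | h1
  · refine ⟨-(B 0 1), B 1 0, Or.inr ?_⟩
    rw [sandwich_eq, ← hB]
    ext i j'
    rw [hBe]
    fin_cases i <;> fin_cases j' <;>
      simp [genMat, Matrix.mul_apply, Fin.sum_univ_two, Matrix.one_apply, h1] <;>
      linear_combination h1 * B 1 1 - hdet
  · refine ⟨B 0 1, -(B 1 0), Or.inl ?_⟩
    rw [sandwich_eq, ← hB]
    ext i j'
    rw [hBe]
    fin_cases i <;> fin_cases j' <;>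
      simp [genMat, Matrix.mul_apply, Fin.sum_univ_two, Matrix.one_apply, h1] <;>
      linear_combination h1 * (-(B 1 1)) + hdet

end S2
section S3
variable {N : ℕ}

lemma genMat_pow_exists (k : ZMod N) [NeZero N] : ∃ n, 0 < n ∧ (genMat k)^n = 1 := by
  have h1 : genMat k * !![0, 1; -1, k] = 1 := by
    ext i j; fin_cases i <;> fin_cases j <;>
      simp [genMat, Matrix.mul_apply, Fin.sum_univ_two, Matrix.one_apply]
  have h2 : !![0, 1; -1, k] * genMat k = 1 := by
    ext i j; fin_cases i <;> fin_cases j <;>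
      simp [genMat, Matrix.mul_apply, Fin.sum_univ_two, Matrix.one_apply]
  let u : (Matrix (Fin 2) (Fin 2) (ZMod N))ˣ := ⟨genMat k, !![0, 1; -1, k], h1, h2⟩
  refine ⟨orderOf u, orderOf_pos u, ?_⟩
  have h3 := pow_orderOf_eq_one u
  have h4 : ((u ^ orderOf u : _ˣ) : Matrix (Fin 2) (Fin 2) (ZMod N)) = (genMat k)^orderOf u :=
    Units.val_pow_eq_pow_val u _
  rw [h3] at h4
  exact h4.symm

lemma monoSet_ne (k : ZMod N) [NeZero N] :
    {n : ℕ | 0 < n ∧ IsSolutionE (List.replicate n k)}.Nonempty := by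
  obtain ⟨n, hn, h1⟩ := genMat_pow_exists k
  exact ⟨n, hn, Or.inl (by rw [Mword_replicate, h1])⟩

lemma monomialSize_mem (k : ZMod N) [NeZero N] :
    0 < monomialSize N k ∧ IsSolutionE (List.replicate (monomialSize N k) k) :=
  Nat.sInf_mem (monoSet_ne k)

lemma monomialSize_le {k : ZMod N} {i : ℕ} (h1 : 0 < i)
    (h2 : IsSolutionE (List.replicate i k)) : monomialSize N k ≤ i :=
  Nat.sInf_le ⟨h1, h2⟩

lemma monomialSize_min {k : ZMod N} {i : ℕ} (h1 : 0 < i) (h2 : i < monomialSize N k) :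
    ¬ IsSolutionE (List.replicate i k) := by
  intro h
  exact Nat.notMem_of_lt_sInf h2 ⟨h1, h⟩

lemma isSolutionE_replicate_iff (k : ZMod N) (n : ℕ) :
    IsSolutionE (List.replicate n k) ↔ (genMat k)^n = 1 ∨ (genMat k)^n = -1 := by
  rw [IsSolutionE, Mword_replicate]

lemma reducible_replicate_iff (k : ZMod N) (n : ℕ) :
    IsReducibleE (List.replicate n k) ↔
      ∃ j x y, 1 ≤ j ∧ j + 3 ≤ n ∧ IsSolutionE (x :: (List.replicate j k ++ [y])) := by
  constructor
  · rintro ⟨a, b, ha, hb, hbsol, heq⟩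
    have hob : oplus a b = List.replicate n k := by
      rcases heq with ⟨i, hi⟩ | ⟨i, hi⟩
      · rw [List.rotate_replicate] at hi; exact hi
      · rw [List.reverse_replicate, List.rotate_replicate] at hi; exact hi
    obtain ⟨x, b', rfl⟩ : ∃ x b', b = x :: b' := by
      cases b with
      | nil => simp at hb
      | cons x b' => exact ⟨x, b', rfl⟩
    have hb' : b' ≠ [] := by
      intro h; rw [h] at hb; simp at hb
    have hbd : b' = b'.dropLast ++ [b'.getLast hb'] := (List.dropLast_append_getLast hb').symm
    -- all elements of oplus are k
    have hmem : ∀ z ∈ oplus a (x :: b'), z = k := (List.eq_replicate_iff.mp hob).2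
    have hmemB : ∀ z ∈ b'.dropLast, z = k := by
      intro z hz
      apply hmem
      rw [oplus]
      simp only [List.mem_cons, List.mem_append]
      right; right
      simpa using Or.inr hz
    have hBrep : b'.dropLast = List.replicate b'.dropLast.length k :=
      List.eq_replicate_of_mem hmemB
    have hlenb : b'.dropLast.length = b'.length - 1 := List.length_dropLast
    have hlb' : 2 ≤ b'.length := by
      have := hb; simp at this; omega
    have hlen : (oplus a (x :: b')).length = n := by rw [hob]; simp
    have hlenop : (oplus a (x :: b')).length = (a.length - 2) + b'.length + 1 := by
      rw [oplus]
      simp [List.length_dropLast, List.length_drop]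
      omega
    refine ⟨b'.length - 1, x, b'.getLast hb', by omega, by omega, ?_⟩
    rw [← hlenb, ← hBrep, ← hbd]
    exact hbsol
  · rintro ⟨j, x, y, hj, hjn, hsol⟩
    refine ⟨(k - y) :: (List.replicate (n - j - 2) k ++ [k - x]),
            x :: (List.replicate j k ++ [y]), ?_, ?_, hsol, Or.inl ⟨0, ?_⟩⟩
    · simp; omega
    · simp; omega
    · rw [List.rotate_zero, oplus]
      have e1 : ((k - y) :: (List.replicate (n - j - 2) k ++ [k - x])).headD 0 = k - y := rfl
      have e2 : ((k - y) :: (List.replicate (n - j - 2) k ++ [k - x])).getLastD 0 = k - x := by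
        rw [show (k - y) :: (List.replicate (n - j - 2) k ++ [k - x]) =
          ((k - y) :: List.replicate (n - j - 2) k) ++ [k - x] by simp]
        exact List.getLastD_concat
      have e3 : (((k - y) :: (List.replicate (n - j - 2) k ++ [k - x])).drop 1).dropLast =
          List.replicate (n - j - 2) k := by
        simp [List.dropLast_concat]
      have e4 : (x :: (List.replicate j k ++ [y])).headD 0 = x := rfl
      have e5 : (x :: (List.replicate j k ++ [y])).getLastD 0 = y := by
        rw [show x :: (List.replicate j k ++ [y]) = (x :: List.replicate j k) ++ [y] by simp]
        exact List.getLastD_concat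
      have e6 : ((x :: (List.replicate j k ++ [y])).drop 1).dropLast =
          List.replicate j k := by
        simp [List.dropLast_concat]
      rw [e1, e2, e3, e4, e5, e6]
      obtain ⟨p, hp⟩ : ∃ p, n - j - 2 = p := ⟨_, rfl⟩
      rw [hp, show n = (1 + p) + (1 + j) by omega,
        List.replicate_add, List.replicate_add, List.replicate_add]
      simp [List.replicate_succ]
end S3
/-- The continuant sequence `V 0 = 0, V 1 = 1, V (n+2) = k V (n+1) - V n` over `ℤ`. -/
def Vs (k : ℤ) : ℕ → ℤ
  | 0 => 0
  | 1 => 1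
  | (n+2) => k * Vs k (n+1) - Vs k n

/-- The trace sequence `T j = tr ([[k,-1],[1,0]]^j)`. -/
def Ts (k : ℤ) (j : ℕ) : ℤ := 2 * Vs k (j+1) - k * Vs k j

/-- The matrix `[[k,-1],[1,0]]^j` over `ℤ`. -/
def Cmat (k : ℤ) (j : ℕ) : Matrix (Fin 2) (Fin 2) ℤ :=
  !![Vs k (j+1), -(Vs k j); Vs k j, Vs k (j+1) - k * Vs k j]

lemma AZ_pow (k : ℤ) (j : ℕ) :
    (!![k, -1; 1, 0] : Matrix (Fin 2) (Fin 2) ℤ)^j = Cmat k j := by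
  induction j with
  | zero =>
    ext i j'; fin_cases i <;> fin_cases j' <;> simp [Cmat, Vs, Matrix.one_apply]
  | succ j ih =>
    rw [pow_succ', ih]
    ext i j'; fin_cases i <;> fin_cases j' <;>
      simp [Cmat, Vs, Matrix.mul_apply, Fin.sum_univ_two] <;> ring

lemma Cmul (k : ℤ) (a b : ℕ) : Cmat k (a + b) = Cmat k a * Cmat k b := by
  rw [← AZ_pow, ← AZ_pow, ← AZ_pow, pow_add]

lemma Dlem (k : ℤ) : ∀ j, Vs k (j+1)^2 - k * Vs k j * Vs k (j+1) + Vs k j ^2 = 1 := by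
  intro j
  induction j with
  | zero => simp [Vs]
  | succ j ih =>
    show Vs k (j+2)^2 - k * Vs k (j+1) * Vs k (j+2) + Vs k (j+1)^2 = 1
    simp only [Vs]
    linear_combination ih

lemma I1 (k : ℤ) (r : ℕ) : Vs k (2*r) = Vs k r * Ts k r := by
  have h := congrArg (fun M : Matrix (Fin 2) (Fin 2) ℤ => M 1 0) (Cmul k r r)
  simp [Cmat, Matrix.mul_apply, Fin.sum_univ_two] at h
  rw [show 2*r = r + r by ring]
  simp only [Cmat, Ts]
  linear_combination h

lemma I2 (k : ℤ) (j : ℕ) : Vs k (2*j+1) + 1 = Vs k (j+1) * Ts k j := by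
  have h := congrArg (fun M : Matrix (Fin 2) (Fin 2) ℤ => M 1 0) (Cmul k (j+1) j)
  simp [Cmat, Matrix.mul_apply, Fin.sum_univ_two] at h
  rw [show 2*j+1 = (j+1) + j by ring]
  simp only [Ts]
  simp only [Vs] at h
  linear_combination h - Dlem k j

lemma I4 (k : ℤ) (t : ℕ) : Ts k (3*t) = Ts k t^3 - 3 * Ts k t := by
  have e1 : Cmat k (t+t+t) = Cmat k t * Cmat k t * Cmat k t := by
    rw [← Cmul, ← Cmul]
  have p1 := congrArg (fun M : Matrix (Fin 2) (Fin 2) ℤ => M 0 0) e1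
  have p2 := congrArg (fun M : Matrix (Fin 2) (Fin 2) ℤ => M 1 0) e1
  simp [Cmat, Matrix.mul_apply, Fin.sum_univ_two] at p1 p2
  rw [show 3*t = t+t+t by ring]
  simp only [Ts]
  linear_combination 2 * p1 - k * p2 + (-3 * (2 * Vs k (t+1) - k * Vs k t)) * Dlem k t

lemma I3 (k : ℤ) (b : ℕ) : Vs k b * Vs k (b+2) = Vs k (b+1)^2 - 1 := by
  simp only [Vs]
  linear_combination (-1 : ℤ) * Dlem k b

lemma Vsum (k : ℤ) (b : ℕ) : Vs k (b+2) + Vs k b = k * Vs k (b+1) := by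
  simp only [Vs]; ring

lemma V3step (k : ℤ) (b : ℕ) : Vs k (b+3) = (k^2 - 1) * Vs k (b+1) - k * Vs k b := by
  show Vs k (b+1+2) = _
  simp only [Vs]
  ring

lemma Trec (k : ℤ) (j : ℕ) : Ts k (j+2) = k * Ts k (j+1) - Ts k j := by
  simp only [Ts, Vs]
  ring

lemma T2rec (k : ℤ) (j : ℕ) : Ts k (j+4) = (k^2 - 2) * Ts k (j+2) - Ts k j := by
  have h1 := Trec k (j+2)
  have h2 := Trec k (j+1)
  have h3 := Trec k j
  rw [show j+2+2 = j+4 by omega, show j+2+1 = j+3 by omega] at h1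
  rw [show j+1+2 = j+3 by omega, show j+1+1 = j+2 by omega] at h2
  linear_combination h1 + k * h2 + h3
/-- helper induction principles -/
lemma two_step_ind {P : ℕ → Prop} (h0 : P 0) (h1 : P 1)
    (hs : ∀ b, P b → P (b+2)) : ∀ a, P a := by
  intro a
  induction a using Nat.strong_induction_on with
  | _ a ih =>
    match a with
    | 0 => exact h0
    | 1 => exact h1
    | (b+2) => exact hs b (ih b (by omega))

lemma three_step_ind {P : ℕ → Prop} (h0 : P 0) (h1 : P 1) (h2 : P 2)
    (hs : ∀ b, P b → P (b+3)) : ∀ a, P a := by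
  intro a
  induction a using Nat.strong_induction_on with
  | _ a ih =>
    match a with
    | 0 => exact h0
    | 1 => exact h1
    | 2 => exact h2
    | (b+3) => exact hs b (ih b (by omega))

section patterns
variable {k : ℤ}

/-- mod 3 pattern when 3 ∤ k² - 1 fails, i.e. 3 ∣ k²-1 (k ≢ 0 mod 3). -/
lemma M3a (h : (3:ℤ) ∣ k^2 - 1) : ∀ a, ((3:ℤ) ∣ Vs k a ↔ 3 ∣ a) := by
  have hk : ¬ (3:ℤ) ∣ k := by
    intro hk
    have h1 : (3:ℤ) ∣ k * k := Dvd.dvd.mul_left hk k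
    have h2 : (3:ℤ) ∣ k^2 := by rwa [pow_two]
    omega
  refine three_step_ind ?_ ?_ ?_ ?_
  · simp [Vs]
  · simp [Vs]; try omega
  · show (3:ℤ) ∣ Vs k 2 ↔ (3:ℕ) ∣ 2
    have : Vs k 2 = k := by simp [Vs]
    rw [this]
    simp [hk]
  · intro b ih
    rw [V3step]
    have e1 : (3:ℤ) ∣ (k^2-1) * Vs k (b+1) := Dvd.dvd.mul_right h _
    constructor
    · intro hd
      have : (3:ℤ) ∣ k * Vs k b := by omega
      rcases ((Int.prime_three.dvd_mul).mp this) with h' | h'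
      · exact absurd h' hk
      · have := ih.mp h'; omega
    · intro hd
      have : (3:ℕ) ∣ b := by omega
      have := ih.mpr this
      have : (3:ℤ) ∣ k * Vs k b := Dvd.dvd.mul_left this k
      omega

/-- mod 3 pattern when 3 ∣ k : V is ≡0 exactly at even indices. -/
lemma M3b (h : (3:ℤ) ∣ k) : ∀ a, ((3:ℤ) ∣ Vs k a ↔ 2 ∣ a) := by
  refine two_step_ind ?_ ?_ ?_
  · simp [Vs]
  · simp [Vs]; try omega
  · intro b ih
    show (3:ℤ) ∣ k * Vs k (b+1) - Vs k b ↔ _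
    have e1 : (3:ℤ) ∣ k * Vs k (b+1) := Dvd.dvd.mul_right h _
    constructor
    · intro hd; have : (3:ℤ) ∣ Vs k b := by omega
      have := ih.mp this; omega
    · intro hd; have : (2:ℕ) ∣ b := by omega
      have := ih.mpr this; omega

/-- mod 3 pattern when 3 ∣ k : T is ≡0 exactly at odd indices. -/
lemma M3T (h : (3:ℤ) ∣ k) : ∀ a, ((3:ℤ) ∣ Ts k a ↔ ¬ 2 ∣ a) := by
  refine two_step_ind ?_ ?_ ?_
  · show (3:ℤ) ∣ Ts k 0 ↔ _
    have : Ts k 0 = 2 := by simp [Ts, Vs]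
    rw [this]; simp
  · show (3:ℤ) ∣ Ts k 1 ↔ _
    have h1 : Ts k 1 = k := by simp [Ts, Vs]; ring
    rw [h1]; simpa using h
  · intro b ih
    rw [Trec]
    have e1 : (3:ℤ) ∣ k * Ts k (b+1) := Dvd.dvd.mul_right h _
    constructor
    · intro hd; have : (3:ℤ) ∣ Ts k b := by omega
      have := ih.mp this; omega
    · intro hd
      have : ¬ (2:ℕ) ∣ b := by omega
      have := ih.mpr this; omega

/-- mod 2 pattern for even k. -/
lemma M2V (h : (2:ℤ) ∣ k) : ∀ a, ((2:ℤ) ∣ Vs k a ↔ 2 ∣ a) := by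
  refine two_step_ind ?_ ?_ ?_
  · simp [Vs]
  · simp [Vs]; try omega
  · intro b ih
    show (2:ℤ) ∣ k * Vs k (b+1) - Vs k b ↔ _
    have e1 : (2:ℤ) ∣ k * Vs k (b+1) := Dvd.dvd.mul_right h _
    constructor
    · intro hd; have : (2:ℤ) ∣ Vs k b := by omega
      have := ih.mp this; omega
    · intro hd; have : (2:ℕ) ∣ b := by omega
      have := ih.mpr this; omega

/-- mod 2 pattern for odd k. -/
lemma M2Vodd (h : ¬ (2:ℤ) ∣ k) : ∀ a, ((2:ℤ) ∣ Vs k a ↔ 3 ∣ a) := by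
  have hk2 : (2:ℤ) ∣ k^2 - 1 := by
    rcases Int.even_or_odd k with he | ho
    · exact absurd he.two_dvd h
    · obtain ⟨c, hc⟩ := ho
      exact ⟨2*c^2 + 2*c, by rw [hc]; ring⟩
  refine three_step_ind ?_ ?_ ?_ ?_
  · simp [Vs]
  · simp [Vs]; try omega
  · show (2:ℤ) ∣ Vs k 2 ↔ (3:ℕ) ∣ 2
    have : Vs k 2 = k := by simp [Vs]
    rw [this]; simp [h]
  · intro b ih
    rw [V3step]
    have e1 : (2:ℤ) ∣ (k^2-1) * Vs k (b+1) := Dvd.dvd.mul_right hk2 _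
    constructor
    · intro hd
      have h2 : (2:ℤ) ∣ k * Vs k b := by omega
      rcases ((Int.prime_two.dvd_mul).mp h2) with h' | h'
      · exact absurd h' h
      · have := ih.mp h'; omega
    · intro hd
      have : (3:ℕ) ∣ b := by omega
      have := ih.mpr this
      have : (2:ℤ) ∣ k * Vs k b := Dvd.dvd.mul_left this k
      omega

/-- T at odd index as a polynomial: `T (2s+1) = (-1)^s (2s+1) k + k³ g`. -/
lemma P1odd (k : ℤ) : ∀ s : ℕ, ∃ g : ℤ,
    Ts k (2*s+1) = (-1)^s * (2*s+1 : ℤ) * k + k^3 * g := by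
  have key : ∀ s : ℕ,
      (∃ g : ℤ, Ts k (2*s+1) = (-1)^s * (2*s+1 : ℤ) * k + k^3 * g) ∧
      (∃ g : ℤ, Ts k (2*(s+1)+1) = (-1)^(s+1) * (2*(s+1)+1 : ℤ) * k + k^3 * g) := by
    intro s
    induction s with
    | zero =>
      constructor
      · exact ⟨0, by simp [Ts, Vs]; ring⟩
      · refine ⟨1, ?_⟩
        show Ts k 3 = _
        have : Ts k 3 = 2 * Vs k 4 - k * Vs k 3 := rfl
        rw [this]
        show 2 * (k * Vs k 3 - Vs k 2) - k * Vs k 3 = _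
        have h3 : Vs k 3 = k * Vs k 2 - Vs k 1 := rfl
        have h2 : Vs k 2 = k * Vs k 1 - Vs k 0 := rfl
        rw [h3, h2]
        simp [Vs]
        ring
    | succ s ih =>
      refine ⟨ih.2, ?_⟩
      obtain ⟨g1, hg1⟩ := ih.1
      obtain ⟨g2, hg2⟩ := ih.2
      refine ⟨(k^2 - 2) * g2 - g1 + (-1)^(s+1) * (2*(s+1)+1 : ℤ), ?_⟩
      have hrec := T2rec k (2*s+1)
      rw [show 2*s+1+4 = 2*(s+2)+1 by omega, show 2*s+1+2 = 2*(s+1)+1 by omega] at hrec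
      rw [hrec, hg1, hg2]
      push_cast
      ring
  exact fun s => (key s).1
end patterns
/-- exact 3-adic valuation predicate. -/
def E3 (x : ℤ) (a : ℕ) : Prop := ∃ u : ℤ, x = 3^a * u ∧ ¬ (3:ℤ) ∣ u

lemma E3.mul {x y : ℤ} {a b : ℕ} (hx : E3 x a) (hy : E3 y b) : E3 (x*y) (a+b) := by
  obtain ⟨u, hu, hu3⟩ := hx
  obtain ⟨w, hw, hw3⟩ := hy
  refine ⟨u*w, by rw [hu, hw]; ring, ?_⟩
  intro hd
  rcases (Int.prime_three.dvd_mul).mp hd with h | h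
  · exact hu3 h
  · exact hw3 h

lemma E3.dvd {x : ℤ} {a : ℕ} (h : E3 x a) : (3:ℤ)^a ∣ x := by
  obtain ⟨u, hu, _⟩ := h; exact ⟨u, hu⟩

lemma E3.not_dvd {x : ℤ} {a m : ℕ} (h : E3 x a) (ham : a < m) : ¬ (3:ℤ)^m ∣ x := by
  obtain ⟨u, hu, hu3⟩ := h
  intro hd
  obtain ⟨d, hd'⟩ : ∃ d : ℕ, m = a + (d + 1) := ⟨m - a - 1, by omega⟩
  rw [hd', hu] at hd
  obtain ⟨c, hc⟩ := hd
  apply hu3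
  have h3a : (3:ℤ)^a ≠ 0 := pow_ne_zero _ (by norm_num)
  have : (3:ℤ)^a * u = (3:ℤ)^a * ((3:ℤ)^(d+1) * c) := by
    rw [hc]; ring
  have hu' : u = (3:ℤ)^(d+1) * c := by
    exact mul_left_cancel₀ h3a this
  exact ⟨(3:ℤ)^d * c, by rw [hu']; ring⟩

lemma E3_of_not_dvd {x : ℤ} (h : ¬ (3:ℤ) ∣ x) : E3 x 0 := ⟨x, by ring, h⟩

section val
variable {k : ℤ} {v : ℕ} (hk3 : (3:ℤ) ∣ k) (hv : E3 k v) (hv1 : 1 ≤ v)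

include hv hv1 in
lemma Tbase : ∀ s : ℕ, ¬ (3:ℤ) ∣ (2*(s:ℤ)+1) → E3 (Ts k (2*s+1)) v := by
  intro s hs
  obtain ⟨g, hg⟩ := P1odd k s
  obtain ⟨u, hu, hu3⟩ := hv
  have hε : ((-1:ℤ)^s = 1 ∨ (-1:ℤ)^s = -1) := by
    rcases Nat.even_or_odd s with h | h
    · exact Or.inl h.neg_one_pow
    · exact Or.inr h.neg_one_pow
  refine ⟨(-1)^s * (2*(s:ℤ)+1) * u + 3^(2*v) * u^3 * g, ?_, ?_⟩
  · rw [hg, hu]; push_cast; ring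
  · intro hd
    have h1 : (3:ℤ) ∣ 3^(2*v) * u^3 * g := by
      refine Dvd.dvd.mul_right (Dvd.dvd.mul_right ?_ _) _
      exact dvd_pow_self 3 (by omega)
    have h2 : (3:ℤ) ∣ (-1)^s * (2*(s:ℤ)+1) * u := by omega
    rcases (Int.prime_three.dvd_mul).mp h2 with h' | h'
    · rcases (Int.prime_three.dvd_mul).mp h' with h'' | h''
      · rcases hε with he | he <;> rw [he] at h'' <;> omega
      · exact hs h''
    · exact hu3 h'

lemma Tstep {t a : ℕ} (ha : 1 ≤ a) (h : E3 (Ts k t) a) : E3 (Ts k (3*t)) (a+1) := by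
  obtain ⟨c, rfl⟩ : ∃ c, a = c + 1 := ⟨a - 1, by omega⟩
  obtain ⟨u, hu, hu3⟩ := h
  refine ⟨3^(2*c+1) * u^3 - u, ?_, ?_⟩
  · rw [I4, hu]; ring
  · intro hd
    have h1 : (3:ℤ) ∣ 3^(2*c+1) * u^3 := Dvd.dvd.mul_right (dvd_pow_self 3 (by omega)) _
    have h2 : (3:ℤ) ∣ u := by omega
    exact hu3 h2

include hv hv1 in
lemma Todd : ∀ c (e : ℕ), ¬ (3 ∣ e) → Odd e → E3 (Ts k (3^c * e)) (v + c) := by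
  intro c
  induction c with
  | zero =>
    intro e he3 heo
    obtain ⟨s, rfl⟩ := heo
    rw [show 3^0 * (2*s+1) = 2*s+1 by ring]
    rw [show v + 0 = v by ring]
    apply Tbase hv hv1
    intro hd
    apply he3
    have : ((3:ℤ)) ∣ ((2*s+1 : ℕ) : ℤ) := by push_cast; convert hd using 2
    exact_mod_cast this
  | succ c ih =>
    intro e he3 heo
    rw [show 3^(c+1) * e = 3 * (3^c * e) by ring, show v + (c+1) = (v+c)+1 by ring]
    exact Tstep (by omega) (ih e he3 heo)

include hk3 in
lemma Vodd_unit {r : ℕ} (hr : Odd r) : E3 (Vs k r) 0 := by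
  apply E3_of_not_dvd
  rw [M3b hk3 r]
  rcases hr with ⟨s, rfl⟩
  omega

include hk3 in
lemma Teven_unit {r : ℕ} (hr : Even r) : E3 (Ts k r) 0 := by
  apply E3_of_not_dvd
  rw [M3T hk3 r]
  rcases hr with ⟨s, rfl⟩
  push_neg
  exact ⟨s, by omega⟩

include hk3 hv hv1 in
lemma LV : ∀ e, 1 ≤ e → ¬ (3 ∣ e) → ∀ c, E3 (Vs k (2 * (3^c * e))) (v + c) := by
  intro e
  induction e using Nat.strong_induction_on with
  | _ e ih =>
    intro he1 he3 c
    rcases Nat.even_or_odd e with hev | hod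
    · obtain ⟨e', rfl⟩ : ∃ e', e = 2 * e' := by
        rcases hev with ⟨e', h⟩; exact ⟨e', by omega⟩
      have he'1 : 1 ≤ e' := by omega
      have he'3 : ¬ (3 ∣ e') := fun h => he3 (Dvd.dvd.mul_left h 2)
      have hVs : E3 (Vs k (2 * (3^c * e'))) (v + c) := ih e' (by omega) he'1 he'3 c
      have hTs : E3 (Ts k (3^c * (2*e'))) 0 := by
        apply Teven_unit hk3
        exact ⟨3^c * e', by ring⟩
      have h4 := hVs.mul hTs
      rw [show (v+c) + 0 = v + c by ring] at h4
      rw [show 2 * (3^c * (2*e')) = 2 * (3^c * (2 * e')) by ring,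
        I1 k (3^c * (2*e')), show (3:ℕ)^c * (2*e') = 2 * (3^c * e') by ring] at *
      exact h4
    · have ht : Odd (3^c * e) := Odd.mul (Odd.pow (by decide : Odd 3)) hod
      rw [I1]
      have h1 : E3 (Vs k (3^c * e)) 0 := Vodd_unit hk3 ht
      have h2 : E3 (Ts k (3^c * e)) (v + c) := Todd hv hv1 c e he3 hod
      have := h1.mul h2
      rwa [show 0 + (v+c) = v + c by ring] at this
end val
section zmodsec
variable {M : ℕ} (kZ : ℤ)

lemma pow_entries (j : ℕ) : (genMat ((kZ : ZMod M)))^j =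
    !![((Vs kZ (j+1) : ℤ) : ZMod M), -((Vs kZ j : ℤ) : ZMod M);
       ((Vs kZ j : ℤ) : ZMod M), ((Vs kZ (j+1) : ℤ) : ZMod M) - (kZ : ZMod M) * ((Vs kZ j : ℤ) : ZMod M)] := by
  have h1 : genMat ((kZ : ZMod M)) = (Int.castRingHom (ZMod M)).mapMatrix (!![kZ,-1;1,0]) := by
    ext i j'
    fin_cases i <;> fin_cases j' <;> simp [genMat, RingHom.mapMatrix_apply]
  rw [h1, ← map_pow, AZ_pow]
  ext i j'
  fin_cases i <;> fin_cases j' <;>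
    simp [Cmat, RingHom.mapMatrix_apply, Matrix.map_apply] <;> push_cast <;> ring

/-- A power of `genMat` is `±1` iff the corresponding `V` value vanishes. -/
lemma Vs_zero_iff (hsq : ∀ x : ZMod M, x*x = 1 → x = 1 ∨ x = -1) (j : ℕ) :
    ((genMat ((kZ : ZMod M)))^j = 1 ∨ (genMat ((kZ : ZMod M)))^j = -1) ↔
      ((Vs kZ j : ℤ) : ZMod M) = 0 := by
  constructor
  · intro h
    rcases h with h | h <;>
    · have h2 := congrArg (fun B : Matrix (Fin 2) (Fin 2) (ZMod M) => B 1 0)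
        ((pow_entries kZ j).symm.trans h)
      simpa [Matrix.one_apply] using h2
  · intro h0
    have hA : (genMat ((kZ : ZMod M)))^j =
        !![((Vs kZ (j+1) : ℤ) : ZMod M), 0; 0, ((Vs kZ (j+1) : ℤ) : ZMod M)] := by
      rw [pow_entries, h0]
      norm_num
    have hdet : ((Vs kZ (j+1) : ℤ) : ZMod M) * ((Vs kZ (j+1) : ℤ) : ZMod M) = 1 := by
      have h3 : ((genMat ((kZ : ZMod M)))^j).det = 1 := by
        rw [Matrix.det_pow, det_genMat, one_pow]
      rw [hA, Matrix.det_fin_two_of] at h3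
      simpa using h3
    rcases hsq _ hdet with h1 | h1
    · left; rw [hA, h1]; symm; exact Matrix.one_fin_two
    · right
      rw [hA, h1]
      have : (-1 : Matrix (Fin 2) (Fin 2) (ZMod M)) = -(!![1,0;0,1]) := by
        rw [← Matrix.one_fin_two]
      rw [this]
      ext i j'
      fin_cases i <;> fin_cases j' <;> simp

/-- The rank of apparition of 0 in the sequence `V` modulo `M`. -/
noncomputable def rank3 (M : ℕ) (kZ : ℤ) : ℕ := sInf {s | 0 < s ∧ ((Vs kZ s : ℤ) : ZMod M) = 0}

lemma pm_pow {R : Type*} [Ring R] {B : R} (h : B = 1 ∨ B = -1) (q : ℕ) :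
    B^q = 1 ∨ B^q = -1 := by
  rcases h with h | h
  · left; rw [h, one_pow]
  · rw [h]
    rcases Nat.even_or_odd q with hq | hq
    · left; exact hq.neg_one_pow
    · right; exact hq.neg_one_pow

lemma rank3_dvd_iff (hsq : ∀ x : ZMod M, x*x = 1 → x = 1 ∨ x = -1)
    (hne : ∃ s, 0 < s ∧ ((Vs kZ s : ℤ) : ZMod M) = 0) (s : ℕ) :
    ((Vs kZ s : ℤ) : ZMod M) = 0 ↔ rank3 M kZ ∣ s := by
  set r := rank3 M kZ with hrdef
  obtain ⟨hr0, hrz⟩ : 0 < r ∧ ((Vs kZ r : ℤ) : ZMod M) = 0 := Nat.sInf_mem hne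
  have hAr := (Vs_zero_iff kZ hsq r).mpr hrz
  constructor
  · intro hz
    have hAs := (Vs_zero_iff kZ hsq s).mpr hz
    have hsplit : (genMat ((kZ : ZMod M)))^s =
        ((genMat ((kZ : ZMod M)))^r)^(s/r) * (genMat ((kZ : ZMod M)))^(s % r) := by
      rw [← pow_mul, ← pow_add]
      congr 1
      exact (Nat.div_add_mod s r).symm
    have hq := pm_pow hAr (s / r)
    have hrem : (genMat ((kZ : ZMod M)))^(s % r) = 1 ∨ (genMat ((kZ : ZMod M)))^(s % r) = -1 := by
      rcases hq with hq | hq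
      · rw [hq, one_mul] at hsplit
        rw [← hsplit]; exact hAs
      · rw [hq] at hsplit
        rcases hAs with h | h <;> rw [h] at hsplit
        · right
          have := congrArg (fun B : Matrix (Fin 2) (Fin 2) (ZMod M) => (-1 : Matrix (Fin 2) (Fin 2) (ZMod M)) * B) hsplit
          simpa [← mul_assoc] using this.symm
        · left
          have := congrArg (fun B : Matrix (Fin 2) (Fin 2) (ZMod M) => (-1 : Matrix (Fin 2) (Fin 2) (ZMod M)) * B) hsplit
          simpa [← mul_assoc] using this.symm
    have hzrem := (Vs_zero_iff kZ hsq (s % r)).mp hrem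
    have : s % r = 0 := by
      by_contra hne0
      have hlt : s % r < r := Nat.mod_lt _ hr0
      exact Nat.notMem_of_lt_sInf hlt ⟨Nat.pos_of_ne_zero hne0, hzrem⟩
    exact Nat.dvd_of_mod_eq_zero this
  · rintro ⟨q, rfl⟩
    apply (Vs_zero_iff kZ hsq (r*q)).mp
    rw [pow_mul]
    exact pm_pow hAr q
end zmodsec

/-- square roots of 1 mod 3^m are ±1. -/
lemma int_sq_pow3 (m : ℕ) (a : ℤ) (h : (3:ℤ)^m ∣ a*a - 1) :
    (3:ℤ)^m ∣ a - 1 ∨ (3:ℤ)^m ∣ a + 1 := by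
  have h2 : (3:ℤ)^m ∣ (a-1)*(a+1) := by
    have : (a-1)*(a+1) = a*a-1 := by ring
    rwa [this]
  by_cases h3 : (3:ℤ) ∣ a - 1
  · left
    have h4 : ¬ (3:ℤ) ∣ a + 1 := by
      intro h5; omega
    exact Int.prime_three.pow_dvd_of_dvd_mul_right m h4 h2
  · right
    exact Int.prime_three.pow_dvd_of_dvd_mul_left m h3 h2

lemma sq_zmod_pow3 (m : ℕ) (x : ZMod (3^m)) (h : x * x = 1) : x = 1 ∨ x = -1 := by
  obtain ⟨a, rfl⟩ := ZMod.intCast_surjective (n := 3^m) x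
  have hd : ((3^m : ℕ) : ℤ) ∣ a*a - 1 := by
    rw [← ZMod.intCast_zmod_eq_zero_iff_dvd]
    push_cast
    rw [h]; ring
  have hd' : (3:ℤ)^m ∣ a*a-1 := by push_cast at hd; exact hd
  rcases int_sq_pow3 m a hd' with h1 | h1
  · left
    have : ((3^m : ℕ) : ℤ) ∣ a - 1 := by push_cast; exact h1
    rw [← ZMod.intCast_zmod_eq_zero_iff_dvd] at this
    push_cast at this
    linear_combination this
  · right
    have : ((3^m : ℕ) : ℤ) ∣ a + 1 := by push_cast; exact h1
    rw [← ZMod.intCast_zmod_eq_zero_iff_dvd] at this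
    push_cast at this
    linear_combination this

lemma coprime_two_pow3 (m : ℕ) : IsCoprime (2:ℤ) ((3:ℤ)^m) := by
  apply IsCoprime.pow_right
  rw [Int.isCoprime_iff_gcd_eq_one]
  decide

lemma sq_zmod_N (m : ℕ) (x : ZMod (2*3^m)) (h : x * x = 1) : x = 1 ∨ x = -1 := by
  obtain ⟨a, rfl⟩ := ZMod.intCast_surjective (n := 2*3^m) x
  have hd : ((2*3^m : ℕ) : ℤ) ∣ a*a - 1 := by
    rw [← ZMod.intCast_zmod_eq_zero_iff_dvd]
    push_cast
    rw [h]; ring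
  have hd' : 2*(3:ℤ)^m ∣ a*a-1 := by push_cast at hd; exact hd
  have h3 : (3:ℤ)^m ∣ a*a - 1 := dvd_trans ⟨2, by ring⟩ hd'
  have h2 : (2:ℤ) ∣ a*a - 1 := dvd_trans ⟨3^m, by ring⟩ hd'
  have hao : Odd a := by
    rcases Int.even_or_odd a with he | ho
    · exfalso
      have he2 : Even (a*a) := he.mul_left a
      obtain ⟨e, he3⟩ := he2
      obtain ⟨d, hd4⟩ := h2
      rw [he3] at hd4
      omega
    · exact ho
  obtain ⟨c, hc⟩ := hao
  have h2m : (2:ℤ) ∣ a - 1 := ⟨c, by omega⟩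
  have h2p : (2:ℤ) ∣ a + 1 := ⟨c+1, by omega⟩
  rcases int_sq_pow3 m a h3 with h1 | h1
  · left
    have hc : 2*(3:ℤ)^m ∣ a - 1 := (coprime_two_pow3 m).mul_dvd h2m h1
    have : ((2*3^m : ℕ) : ℤ) ∣ a - 1 := by push_cast; exact hc
    rw [← ZMod.intCast_zmod_eq_zero_iff_dvd] at this
    push_cast at this
    linear_combination this
  · right
    have hc : 2*(3:ℤ)^m ∣ a + 1 := (coprime_two_pow3 m).mul_dvd h2p h1
    have : ((2*3^m : ℕ) : ℤ) ∣ a + 1 := by push_cast; exact hc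
    rw [← ZMod.intCast_zmod_eq_zero_iff_dvd] at this
    push_cast at this
    linear_combination this
section crit
variable {N : ℕ}

lemma crit [NeZero N] (hsq : ∀ x : ZMod N, x*x = 1 → x = 1 ∨ x = -1) (kZ : ℤ) :
    IsReducibleSol (monoSol N ((kZ : ZMod N))) ↔
      (monomialSize N ((kZ : ZMod N)) < 3 ∨
       ∃ j, 1 ≤ j ∧ j + 3 ≤ monomialSize N ((kZ : ZMod N)) ∧
        (((Vs kZ (j+1) : ℤ) : ZMod N) = 1 ∨ ((Vs kZ (j+1) : ℤ) : ZMod N) = -1)) := by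
  set K := ((kZ : ℤ) : ZMod N) with hK
  set n := monomialSize N K with hn
  have hmem := monomialSize_mem K
  have hsol : IsSolutionE (monoSol N K) := hmem.2
  have hlen : (monoSol N K).length = n := by simp [monoSol, hn]
  have hent : ∀ j, ((genMat K)^j) 0 0 = ((Vs kZ (j+1) : ℤ) : ZMod N) := by
    intro j
    rw [hK, pow_entries]
    simp
  have hred : IsReducibleE (monoSol N K) ↔
      ∃ j, 1 ≤ j ∧ j + 3 ≤ n ∧
        (((Vs kZ (j+1) : ℤ) : ZMod N) = 1 ∨ ((Vs kZ (j+1) : ℤ) : ZMod N) = -1) := by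
    show IsReducibleE (List.replicate n K) ↔ _
    rw [reducible_replicate_iff]
    constructor
    · rintro ⟨j, x, y, h1, h2, h3⟩
      refine ⟨j, h1, h2, ?_⟩
      have h4 := isSolution_sandwich K x y j h3
      rwa [hent j] at h4
    · rintro ⟨j, h1, h2, h3⟩
      obtain ⟨x, y, hs⟩ := sandwich_solution K j (by rw [hent j]; exact h3)
      exact ⟨j, x, y, h1, h2, hs⟩
  constructor
  · rintro ⟨hs, hni⟩
    by_cases h3n : 3 ≤ n
    · right
      rw [← hred]
      by_contra hr
      exact hni ⟨hs, by rwa [hlen], hr⟩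
    · left; omega
  · intro h
    refine ⟨hsol, ?_⟩
    rintro ⟨_, hlen3, hnred⟩
    rcases h with h | h
    · rw [hlen] at hlen3; omega
    · exact hnred (hred.mpr h)
end crit
lemma red_case (m k : ℕ) (hm : 2 ≤ m) (hk : k ≤ 2*3^m - 1) (hk3 : 3 ∣ k)
    (h1 : k ≠ 3^m) (h2 : k ≠ 3^(m-1)) (h5 : k ≠ 5*3^(m-1))
    (n : ℕ) (hn0 : 0 < n)
    (hnsol : ((2*3^m : ℕ) : ℤ) ∣ Vs (k:ℤ) n)
    (hnle : ∀ i, 0 < i → ((2*3^m : ℕ) : ℤ) ∣ Vs (k:ℤ) i → n ≤ i) :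
    n < 3 ∨ ∃ j, 1 ≤ j ∧ j + 3 ≤ n ∧ ((2*3^m : ℕ) : ℤ) ∣ Vs (k:ℤ) (j+1) + 1 := by
  by_cases hk0 : k = 0
  · left
    have h2' : ((2*3^m : ℕ) : ℤ) ∣ Vs (k:ℤ) 2 := by
      subst hk0
      have : Vs ((0:ℕ):ℤ) 2 = 0 := by simp [Vs]
      rw [this]
      exact dvd_zero _
    have := hnle 2 (by norm_num) h2'
    omega
  · obtain ⟨v, u, hu3, hku⟩ := Nat.exists_eq_pow_mul_and_not_dvd hk0 3 (by norm_num)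
    have hu1 : 1 ≤ u := by
      rcases Nat.eq_zero_or_pos u with h | h
      · subst h; simp at hku; omega
      · exact h
    have hv1 : 1 ≤ v := by
      by_contra hv0
      have : v = 0 := by omega
      subst this
      simp at hku
      exact hu3 (hku ▸ hk3)
    have h3mge : 9 ≤ 3^m := by
      calc (9:ℕ) = 3^2 := by norm_num
      _ ≤ 3^m := Nat.pow_le_pow_right (by norm_num) hm
    have hvm : v ≤ m - 1 := by
      by_contra hcon
      have hvm' : m ≤ v := by omega
      have h3v : 3^m ≤ 3^v := Nat.pow_le_pow_right (by norm_num) hvm'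
      rcases Nat.lt_or_ge u 2 with hu | hu
      · -- u = 1, k = 3^v
        have hu' : u = 1 := by omega
        subst hu'
        rw [mul_one] at hku
        rcases Nat.lt_or_ge v (m+1) with hv' | hv'
        · have : v = m := by omega
          subst this
          exact h1 hku
        · have : 3^(m+1) ≤ 3^v := Nat.pow_le_pow_right (by norm_num) hv'
          have h3m1 : 3^(m+1) = 3*3^m := by rw [pow_succ']
          omega
      · have h6 : 2*3^v ≤ u * 3^v := Nat.mul_le_mul_right _ hu
        have h7 : k = u * 3^v := by rw [hku, mul_comm]
        omega
    have hEk : E3 (k:ℤ) v := by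
      refine ⟨(u:ℤ), ?_, ?_⟩
      · push_cast [hku]; ring
      · intro hd
        exact hu3 (by exact_mod_cast hd)
    have hk3Z : (3:ℤ) ∣ (k:ℤ) := by exact_mod_cast hk3
    have hpar : v = m - 1 → 2 ∣ k := by
      intro hveq
      subst hveq
      have h3m1pos : 1 ≤ 3^(m-1) := Nat.one_le_pow _ _ (by norm_num)
      have h3msplit : 3^m = 3^(m-1)*3 := by
        rw [← pow_succ]; congr 1; omega
      have hub : u ≤ 5 := by
        by_contra hu6
        have : 3^(m-1)*6 ≤ 3^(m-1)*u := Nat.mul_le_mul_left _ (by omega)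
        omega
      interval_cases u
      · rw [mul_one] at hku; exact absurd hku h2
      · exact ⟨3^(m-1), by omega⟩
      · exact absurd (by norm_num) hu3
      · exact ⟨3^(m-1)*2, by omega⟩
      · exact absurd (by omega : k = 5*3^(m-1)) h5
    set c := m - 1 - v with hc
    have h3cpos : 1 ≤ 3^c := Nat.one_le_pow _ _ (by norm_num)
    set w := 2 * 3^c + 1 with hw
    have h3part : (3:ℤ)^m ∣ Vs (k:ℤ) w + 1 := by
      have hI2 := I2 (k:ℤ) (3^c)
      have hVeven : (3:ℤ) ∣ Vs (k:ℤ) (3^c + 1) := by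
        rw [M3b hk3Z]
        have : Odd ((3:ℕ)^c) := Odd.pow (by decide)
        obtain ⟨s, hs⟩ := this
        omega
      have hTs : (3:ℤ)^(v+c) ∣ Ts (k:ℤ) (3^c) := by
        have := (Todd hEk hv1 c 1 (by norm_num) ⟨0, by norm_num⟩).dvd
        rwa [mul_one] at this
      rw [hw, hI2]
      have hsplit : (3:ℤ)^m = 3 * 3^(v+c) := by
        rw [← pow_succ']
        congr 1
        omega
      rw [hsplit]
      exact mul_dvd_mul hVeven hTs
    have h2part : (2:ℤ) ∣ Vs (k:ℤ) w + 1 := by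
      rcases Nat.even_or_odd k with hke | hko
      · have hnd : ¬ (2:ℤ) ∣ Vs (k:ℤ) w := by
          rw [M2V (by exact_mod_cast hke.two_dvd)]
          omega
        omega
      · have hcge : 1 ≤ c := by
          by_contra hc0
          have : v = m - 1 := by omega
          have := hpar this
          rcases hko with ⟨s, hs⟩
          omega
        have hnd : ¬ (2:ℤ) ∣ Vs (k:ℤ) w := by
          have hkoZ : ¬ (2:ℤ) ∣ (k:ℤ) := by
            rcases hko with ⟨s, hs⟩
            intro hd
            have : (2:ℕ) ∣ k := by exact_mod_cast hd
            omega
          rw [M2Vodd hkoZ]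
          have h3c : (3:ℕ) ∣ 3^c := dvd_pow_self 3 (by omega)
          omega
        omega
    have hNdvd : ((2*3^m : ℕ):ℤ) ∣ Vs (k:ℤ) w + 1 := by
      push_cast
      exact (coprime_two_pow3 m).mul_dvd h2part h3part
    have hlow : ∀ i, 1 ≤ i → i ≤ w + 1 → ¬ ((2*3^m:ℕ):ℤ) ∣ Vs (k:ℤ) i := by
      intro i hi1 hiw hdvd
      have h3mdvd : (3:ℤ)^m ∣ Vs (k:ℤ) i := by
        have hcast : ((2*3^m:ℕ):ℤ) = 2*(3:ℤ)^m := by push_cast; ring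
        rw [hcast] at hdvd
        exact dvd_trans ⟨2, by ring⟩ hdvd
      rcases Nat.even_or_odd i with hie | hio
      · obtain ⟨r, hr⟩ := hie
        have hr1 : 1 ≤ r := by omega
        obtain ⟨cc, ee, hee3, hree⟩ :=
          Nat.exists_eq_pow_mul_and_not_dvd (show r ≠ 0 by omega) 3 (by norm_num)
        have hee1 : 1 ≤ ee := by
          rcases Nat.eq_zero_or_pos ee with h | h
          · subst h; simp at hree; omega
          · exact h
        have hccle : cc ≤ c := by
          by_contra hcc
          have hA : 3^(c+1) ≤ 3^cc := Nat.pow_le_pow_right (by norm_num) (by omega)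
          have hB : 3^cc ≤ r := by
            rw [hree]
            exact Nat.le_mul_of_pos_right _ (by omega)
          have hC : 3^(c+1) = 3*3^c := by rw [pow_succ']
          omega
        have hE := LV hk3Z hEk hv1 ee hee1 hee3 cc
        have hnd := hE.not_dvd (show v + cc < m by omega)
        apply hnd
        have hidx : 2 * (3^cc * ee) = i := by rw [← hree]; omega
        rw [hidx]
        exact h3mdvd
      · have hnd : ¬ (3:ℤ) ∣ Vs (k:ℤ) i := by
          rw [M3b hk3Z]
          obtain ⟨s, rfl⟩ := hio
          omega
        exact hnd (dvd_trans (dvd_pow_self 3 (by omega)) h3mdvd)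
    have hnw : w + 2 ≤ n := by
      by_contra hcon
      exact hlow n (by omega) (by omega) hnsol
    right
    exact ⟨2*3^c, by omega, by omega, hNdvd⟩
lemma irr_coprime (m k : ℕ) (hm : 2 ≤ m) (hk3 : ¬ 3 ∣ k)
    (n : ℕ) (hn0 : 0 < n)
    (hnsol : ((2*3^m : ℕ) : ℤ) ∣ Vs (k:ℤ) n)
    (hnle : ∀ i, 0 < i → ((2*3^m : ℕ) : ℤ) ∣ Vs (k:ℤ) i → n ≤ i) :
    3 ≤ n ∧ ∀ j, 1 ≤ j → j + 3 ≤ n →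
      ¬ (((2*3^m:ℕ):ℤ) ∣ Vs (k:ℤ) (j+1) - 1 ∨ ((2*3^m:ℕ):ℤ) ∣ Vs (k:ℤ) (j+1) + 1) := by
  have hk3Z : ¬ (3:ℤ) ∣ (k:ℤ) := by
    intro h; exact hk3 (by exact_mod_cast h)
  have hksq : (3:ℤ) ∣ (k:ℤ)^2 - 1 := by
    have hmod : (k:ℤ) % 3 = 1 ∨ (k:ℤ) % 3 = 2 := by omega
    rcases hmod with h | h
    · obtain ⟨t, ht⟩ : ∃ t, (k:ℤ) = 3*t+1 := ⟨(k:ℤ)/3, by omega⟩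
      exact ⟨3*t^2+2*t, by rw [ht]; ring⟩
    · obtain ⟨t, ht⟩ : ∃ t, (k:ℤ) = 3*t+2 := ⟨(k:ℤ)/3, by omega⟩
      exact ⟨3*t^2+4*t+1, by rw [ht]; ring⟩
  have hcast : ((2*3^m:ℕ):ℤ) = 2*(3:ℤ)^m := by push_cast; ring
  have hNto3 : ∀ x:ℤ, ((2*3^m:ℕ):ℤ) ∣ x → (3:ℤ)^m ∣ x := by
    intro x h; rw [hcast] at h; exact dvd_trans ⟨2, by ring⟩ h
  have hNto2 : ∀ x:ℤ, ((2*3^m:ℕ):ℤ) ∣ x → (2:ℤ) ∣ x := by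
    intro x h; rw [hcast] at h; exact dvd_trans ⟨3^m, by ring⟩ h
  have hzm : ∀ s, ((Vs (k:ℤ) s : ℤ) : ZMod (3^m)) = 0 ↔ (3:ℤ)^m ∣ Vs (k:ℤ) s := by
    intro s
    rw [ZMod.intCast_zmod_eq_zero_iff_dvd]
    constructor <;> intro h
    · have : ((3^m:ℕ):ℤ) = (3:ℤ)^m := by push_cast; ring
      rwa [this] at h
    · have : ((3^m:ℕ):ℤ) = (3:ℤ)^m := by push_cast; ring
      rwa [this]
  set r := rank3 (3^m) (k:ℤ) with hrdef
  have hne : ∃ s, 0 < s ∧ ((Vs (k:ℤ) s : ℤ) : ZMod (3^m)) = 0 :=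
    ⟨n, hn0, (hzm n).mpr (hNto3 _ hnsol)⟩
  have hZ3 := rank3_dvd_iff (k:ℤ) (sq_zmod_pow3 m) hne
  have hrmem : 0 < r ∧ ((Vs (k:ℤ) r : ℤ) : ZMod (3^m)) = 0 := Nat.sInf_mem hne
  have hr0 : 0 < r := hrmem.1
  have hr3m : (3:ℤ)^m ∣ Vs (k:ℤ) r := (hzm r).mp hrmem.2
  have hr3 : 3 ∣ r := by
    have h3V : (3:ℤ) ∣ Vs (k:ℤ) r := dvd_trans (dvd_pow_self 3 (by omega)) hr3m
    rwa [M3a hksq] at h3V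
  have hrn : r ∣ n := (hZ3 n).mp ((hzm n).mpr (hNto3 _ hnsol))
  have hnge3 : 3 ≤ n := le_trans (by omega) (Nat.le_of_dvd hn0 hrn)
  refine ⟨hnge3, ?_⟩
  rintro j hj1 hjn hdisj
  have hOdd : ¬ (2:ℤ) ∣ Vs (k:ℤ) (j+1) := by
    rcases hdisj with h | h <;> (have h2 := hNto2 _ h; omega)
  have h3sq : (3:ℤ)^m ∣ (Vs (k:ℤ) (j+1))^2 - 1 := by
    rcases hdisj with h | h
    · have h3 := hNto3 _ h
      have he : (Vs (k:ℤ) (j+1))^2 - 1 = (Vs (k:ℤ) (j+1) - 1)*(Vs (k:ℤ) (j+1) + 1) := by ring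
      rw [he]; exact Dvd.dvd.mul_right h3 _
    · have h3 := hNto3 _ h
      have he : (Vs (k:ℤ) (j+1))^2 - 1 = (Vs (k:ℤ) (j+1) - 1)*(Vs (k:ℤ) (j+1) + 1) := by ring
      rw [he]; exact Dvd.dvd.mul_left h3 _
  have hVi3 : ¬ (3:ℤ) ∣ Vs (k:ℤ) (j+1) := by
    rcases hdisj with h | h <;>
      (have h3 := dvd_trans (dvd_pow_self (3:ℤ) (show m ≠ 0 by omega)) (hNto3 _ h); omega)
  have hprod : (3:ℤ)^m ∣ Vs (k:ℤ) j * Vs (k:ℤ) (j+2) := by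
    rw [I3]; exact h3sq
  have hcases : (3:ℤ)^m ∣ Vs (k:ℤ) j ∨ (3:ℤ)^m ∣ Vs (k:ℤ) (j+2) := by
    by_cases h3j : (3:ℤ) ∣ Vs (k:ℤ) j
    · have h3j2 : ¬ (3:ℤ) ∣ Vs (k:ℤ) (j+2) := by
        intro hb
        have hsum := Vsum (k:ℤ) j
        have hmul : (3:ℤ) ∣ (k:ℤ) * Vs (k:ℤ) (j+1) := by omega
        rcases (Int.prime_three.dvd_mul).mp hmul with h | h
        · exact hk3Z h
        · exact hVi3 h
      exact Or.inl (Int.prime_three.pow_dvd_of_dvd_mul_right m h3j2 hprod)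
    · exact Or.inr (Int.prime_three.pow_dvd_of_dvd_mul_left m h3j hprod)
  have hdivs : r ∣ j ∨ r ∣ j + 2 := by
    rcases hcases with h | h
    · exact Or.inl ((hZ3 j).mp ((hzm j).mpr h))
    · exact Or.inr ((hZ3 (j+2)).mp ((hzm (j+2)).mpr h))
  rcases Nat.even_or_odd k with hke | hko
  · -- k even
    have hkeZ : (2:ℤ) ∣ (k:ℤ) := by
      have := hke.two_dvd; exact_mod_cast this
    have hjodd : ¬ 2 ∣ (j+1) := by
      rw [M2V hkeZ] at hOdd; exact hOdd
    rcases Nat.even_or_odd r with hre | hro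
    · -- r even : n = r
      have hnr : n ≤ r := by
        apply hnle r hr0
        rw [hcast]
        refine (coprime_two_pow3 m).mul_dvd ?_ hr3m
        rw [M2V hkeZ]; exact hre.two_dvd
      have hneq : n = r := le_antisymm hnr (Nat.le_of_dvd hn0 hrn)
      rcases hdivs with hd | hd
      · have := Nat.le_of_dvd (by omega) hd; omega
      · have := Nat.le_of_dvd (by omega) hd; omega
    · -- r odd : n = 2r
      have h2n : 2 ∣ n := by
        have h2V := hNto2 _ hnsol
        rwa [M2V hkeZ] at h2V
      have h2r : (2*r) ∣ n := Nat.Coprime.mul_dvd_of_dvd_of_dvd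
        ((Nat.Prime.coprime_iff_not_dvd Nat.prime_two).mpr (by
          rcases hro with ⟨s, hs⟩; omega)) h2n hrn
      have hn2r : n ≤ 2*r := by
        apply hnle (2*r) (by omega)
        rw [hcast]
        refine (coprime_two_pow3 m).mul_dvd ?_ ?_
        · rw [M2V hkeZ]; exact ⟨r, rfl⟩
        · exact (hzm (2*r)).mp ((hZ3 (2*r)).mpr ⟨2, by ring⟩)
      have hneq : n = 2*r := le_antisymm hn2r (Nat.le_of_dvd hn0 h2r)
      rcases hdivs with hd | hd
      · obtain ⟨q, hq⟩ := hd
        rcases hro with ⟨s, hs⟩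
        match q, hq with
        | 0, hq => omega
        | 1, hq => omega
        | (q+2), hq =>
          have : r*2 ≤ r*(q+2) := Nat.mul_le_mul_left r (by omega)
          omega
      · obtain ⟨q, hq⟩ := hd
        rcases hro with ⟨s, hs⟩
        match q, hq with
        | 0, hq => omega
        | 1, hq => omega
        | (q+2), hq =>
          have : r*2 ≤ r*(q+2) := Nat.mul_le_mul_left r (by omega)
          omega
  · -- k odd : n = r
    have hkoZ : ¬ (2:ℤ) ∣ (k:ℤ) := by
      intro h
      have : (2:ℕ) ∣ k := by exact_mod_cast h
      rcases hko with ⟨s, hs⟩; omega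
    have hnr : n ≤ r := by
      apply hnle r hr0
      rw [hcast]
      refine (coprime_two_pow3 m).mul_dvd ?_ hr3m
      rw [M2Vodd hkoZ]; exact hr3
    have hneq : n = r := le_antisymm hnr (Nat.le_of_dvd hn0 hrn)
    rcases hdivs with hd | hd
    · have := Nat.le_of_dvd (by omega) hd; omega
    · have := Nat.le_of_dvd (by omega) hd; omega
lemma irr_special (m k : ℕ) (hm : 2 ≤ m) (c : ℕ) (hc : c = 1 ∨ c = 3 ∨ c = 5)
    (hkc : k = c * 3^(m-1))
    (n : ℕ) (hn0 : 0 < n)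
    (hnsol : ((2*3^m : ℕ) : ℤ) ∣ Vs (k:ℤ) n)
    (hnle : ∀ i, 0 < i → ((2*3^m : ℕ) : ℤ) ∣ Vs (k:ℤ) i → n ≤ i) :
    3 ≤ n ∧ ∀ j, 1 ≤ j → j + 3 ≤ n →
      ¬ (((2*3^m:ℕ):ℤ) ∣ Vs (k:ℤ) (j+1) - 1 ∨ ((2*3^m:ℕ):ℤ) ∣ Vs (k:ℤ) (j+1) + 1) := by
  obtain ⟨e, he⟩ : ∃ e, m = e + 2 := ⟨m - 2, by omega⟩
  subst he
  have hkc' : k = c * 3^(e+1) := by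
    rw [hkc, show e+2-1 = e+1 by omega]
  have hkcZ : (k:ℤ) = (c:ℤ) * 3^(e+1) := by
    rw [hkc']; push_cast; ring
  have hcodd : Odd c := by rcases hc with h|h|h <;> subst h <;> decide
  have hkodd : Odd k := by
    rw [hkc]
    exact hcodd.mul (Odd.pow (by decide))
  have hcast : ((2*3^(e+2):ℕ):ℤ) = 2*(3:ℤ)^(e+2) := by push_cast; ring
  have h3N : (3:ℤ) ∣ ((2*3^(e+2):ℕ):ℤ) := by rw [hcast]; exact ⟨2*3^(e+1), by ring⟩
  have h2N : (2:ℤ) ∣ ((2*3^(e+2):ℕ):ℤ) := by rw [hcast]; exact ⟨3^(e+2), by ring⟩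
  have h3k : (3:ℤ) ∣ (k:ℤ) := ⟨(c:ℤ)*3^e, by rw [hkcZ]; ring⟩
  have h2k : ¬ (2:ℤ) ∣ (k:ℤ) := by
    rcases hkodd with ⟨s, hs⟩
    intro hd
    have : (2:ℕ) ∣ k := by exact_mod_cast hd
    omega
  -- explicit small values of Vs
  have e0 : Vs (k:ℤ) 0 = 0 := rfl
  have e1 : Vs (k:ℤ) 1 = 1 := rfl
  have e2 : Vs (k:ℤ) 2 = (k:ℤ) * Vs (k:ℤ) 1 - Vs (k:ℤ) 0 := rfl
  have e3 : Vs (k:ℤ) 3 = (k:ℤ) * Vs (k:ℤ) 2 - Vs (k:ℤ) 1 := rfl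
  have e4 : Vs (k:ℤ) 4 = (k:ℤ) * Vs (k:ℤ) 3 - Vs (k:ℤ) 2 := rfl
  have e5 : Vs (k:ℤ) 5 = (k:ℤ) * Vs (k:ℤ) 4 - Vs (k:ℤ) 3 := rfl
  have e6 : Vs (k:ℤ) 6 = (k:ℤ) * Vs (k:ℤ) 5 - Vs (k:ℤ) 4 := rfl
  have hv2 : Vs (k:ℤ) 2 = (k:ℤ) := by rw [e2, e1, e0]; ring
  have hv3 : Vs (k:ℤ) 3 = (k:ℤ)^2 - 1 := by rw [e3, hv2, e1]; ring
  have hv4 : Vs (k:ℤ) 4 = (k:ℤ)^3 - 2*(k:ℤ) := by rw [e4, hv3, hv2]; ring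
  have hv6 : Vs (k:ℤ) 6 = (k:ℤ)*((k:ℤ)^2-1)*((k:ℤ)^2-3) := by
    rw [e6, e5, hv4, hv3]; ring
  -- n ≤ 6
  have hn6 : n ≤ 6 := by
    apply hnle 6 (by norm_num)
    rw [hv6, hcast]
    have h2part : (2:ℤ) ∣ (k:ℤ)*((k:ℤ)^2-1)*((k:ℤ)^2-3) := by
      rcases hkodd with ⟨s, hs⟩
      have hsZ : (k:ℤ) = 2*(s:ℤ)+1 := by exact_mod_cast hs
      exact ⟨(2*s^2+2*s)*((k:ℤ)*((k:ℤ)^2-3)), by rw [hsZ]; push_cast; ring⟩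
    have h3part : (3:ℤ)^(e+2) ∣ (k:ℤ)*((k:ℤ)^2-1)*((k:ℤ)^2-3) := by
      exact ⟨(c:ℤ)*((c:ℤ)^2*3^(2*e+1) - 1)*((k:ℤ)^2-1), by rw [hkcZ]; ring⟩
    exact (coprime_two_pow3 (e+2)).mul_dvd h2part h3part
  -- n ≥ 3
  have h3e : (1:ℕ) ≤ 3^(e+1) := Nat.one_le_pow _ _ (by norm_num)
  have hkpos : 0 < k := by
    rw [hkc']
    have : 1 ≤ c := by rcases hc with h|h|h <;> omega
    exact Nat.mul_pos (by omega) (by omega)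
  have hkltN : k < 2*3^(e+2) := by
    have h1 := hkc'
    have h2 : 3^(e+2) = 3^(e+1)*3 := by rw [pow_succ]
    have hc5 : c ≤ 5 := by rcases hc with h|h|h <;> omega
    have := Nat.mul_le_mul_right (3^(e+1)) hc5
    omega
  have hkN : ¬ ((2*3^(e+2):ℕ):ℤ) ∣ (k:ℤ) := by
    intro hd
    have hnat : (2*3^(e+2):ℕ) ∣ k := by exact_mod_cast hd
    have := Nat.le_of_dvd hkpos hnat
    omega
  have hn3 : 3 ≤ n := by
    by_contra hcon
    interval_cases n
    · -- n = 1 : N ∣ 1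
      rw [e1] at hnsol
      have hNbig : (18:ℤ) ≤ ((2*3^(e+2):ℕ):ℤ) := by
        rw [hcast]
        have : (3:ℤ)^2 ≤ 3^(e+2) := pow_le_pow_right₀ (by norm_num) (by omega)
        norm_num at this ⊢
        omega
      have := Int.le_of_dvd (by norm_num) hnsol
      omega
    · rw [hv2] at hnsol
      exact hkN hnsol
  refine ⟨hn3, ?_⟩
  intro j hj1 hjn hdisj
  have h3k2 : (3:ℤ) ∣ (k:ℤ)^2 := by
    rw [pow_two]; exact Dvd.dvd.mul_right h3k _
  have hj3 : j ≤ 3 := by omega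
  interval_cases j
  · -- i = 2 : Vs 2 = k
    rw [hv2] at hdisj
    rcases hdisj with h | h <;> (have := dvd_trans h3N h; omega)
  · -- i = 3 : Vs 3 = k² - 1
    rw [hv3] at hdisj
    rcases hdisj with h | h
    · have := dvd_trans h3N h
      omega
    · have h2' := dvd_trans h2N h
      have : (2:ℤ) ∣ (k:ℤ)*(k:ℤ) := by
        have hr : (k:ℤ)^2 - 1 + 1 = (k:ℤ)*(k:ℤ) := by ring
        rwa [hr] at h2'
      rcases (Int.prime_two.dvd_mul).mp this with h' | h' <;> exact h2k h'
  · -- i = 4 : Vs 4 = k³ - 2k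
    rw [hv4] at hdisj
    have h3v4 : (3:ℤ) ∣ (k:ℤ)^3 - 2*(k:ℤ) := by
      have : (k:ℤ)^3 - 2*(k:ℤ) = (k:ℤ)*((k:ℤ)^2 - 2) := by ring
      rw [this]
      exact Dvd.dvd.mul_right h3k _
    rcases hdisj with h | h <;> (have := dvd_trans h3N h; omega)
theorem stmt_2' (m : ℕ) (hm : 2 ≤ m) (k : ℕ) (hk : k ≤ 2 * 3 ^ m - 1) :
    IsReducibleSol (monoSol (2 * 3 ^ m) (k : ZMod (2 * 3 ^ m))) ↔
      (3 ∣ k ∧ k ≠ 3 ^ m ∧ k ≠ 3 ^ (m - 1) ∧ k ≠ 5 * 3 ^ (m - 1)) := by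
  have hNpos : 0 < 2*3^m := by positivity
  haveI : NeZero (2*3^m) := ⟨by omega⟩
  have hKeq : ((k:ℕ) : ZMod (2*3^m)) = (((k:ℕ):ℤ) : ZMod (2*3^m)) :=
    (Int.cast_natCast k).symm
  rw [hKeq, crit (sq_zmod_N m) ((k:ℕ):ℤ)]
  set n := monomialSize (2*3^m) ((((k:ℕ):ℤ)) : ZMod (2*3^m)) with hn
  have hsq := sq_zmod_N m
  have hmem := monomialSize_mem ((((k:ℕ):ℤ)) : ZMod (2*3^m))
  have hn0 : 0 < n := hmem.1
  have hchar : ∀ i, IsSolutionE (List.replicate i ((((k:ℕ):ℤ)) : ZMod (2*3^m))) ↔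
      ((2*3^m:ℕ):ℤ) ∣ Vs (k:ℤ) i := by
    intro i
    rw [isSolutionE_replicate_iff, Vs_zero_iff _ hsq i, ZMod.intCast_zmod_eq_zero_iff_dvd]
  have hnsol : ((2*3^m:ℕ):ℤ) ∣ Vs (k:ℤ) n := (hchar n).mp hmem.2
  have hnle : ∀ i, 0 < i → ((2*3^m:ℕ):ℤ) ∣ Vs (k:ℤ) i → n ≤ i := by
    intro i hi hd
    exact monomialSize_le hi ((hchar i).mpr hd)
  have hpm : ∀ s, ((((Vs (k:ℤ) s : ℤ)) : ZMod (2*3^m)) = 1 ∨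
        (((Vs (k:ℤ) s : ℤ)) : ZMod (2*3^m)) = -1) ↔
      (((2*3^m:ℕ):ℤ) ∣ Vs (k:ℤ) s - 1 ∨ ((2*3^m:ℕ):ℤ) ∣ Vs (k:ℤ) s + 1) := by
    intro s
    have h1 : (((Vs (k:ℤ) s : ℤ)) : ZMod (2*3^m)) = 1 ↔
        ((2*3^m:ℕ):ℤ) ∣ Vs (k:ℤ) s - 1 := by
      rw [← ZMod.intCast_zmod_eq_zero_iff_dvd]
      push_cast
      constructor <;> intro h <;> linear_combination h
    have h2 : (((Vs (k:ℤ) s : ℤ)) : ZMod (2*3^m)) = -1 ↔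
        ((2*3^m:ℕ):ℤ) ∣ Vs (k:ℤ) s + 1 := by
      rw [← ZMod.intCast_zmod_eq_zero_iff_dvd]
      push_cast
      constructor <;> intro h <;> linear_combination h
    rw [h1, h2]
  constructor
  · intro h
    by_contra hrhs
    have hcase : ¬ 3∣k ∨ k = 3^m ∨ k = 3^(m-1) ∨ k = 5*3^(m-1) := by tauto
    have hirr : 3 ≤ n ∧ ∀ j, 1 ≤ j → j+3 ≤ n →
        ¬ (((2*3^m:ℕ):ℤ) ∣ Vs (k:ℤ) (j+1) - 1 ∨ ((2*3^m:ℕ):ℤ) ∣ Vs (k:ℤ) (j+1) + 1) := by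
      rcases hcase with h' | h' | h' | h'
      · exact irr_coprime m k hm h' n hn0 hnsol hnle
      · refine irr_special m k hm 3 (by tauto) ?_ n hn0 hnsol hnle
        rw [h']
        rw [show m = (m-1)+1 by omega, pow_succ']
        norm_num
      · exact irr_special m k hm 1 (by tauto) (by rw [h', one_mul]) n hn0 hnsol hnle
      · exact irr_special m k hm 5 (by tauto) h' n hn0 hnsol hnle
    rcases h with h | ⟨j, hj1, hjn, hj⟩
    · omega
    · exact hirr.2 j hj1 hjn ((hpm (j+1)).mp hj)
  · rintro ⟨h3, h1, h2, h5⟩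
    rcases red_case m k hm hk h3 h1 h2 h5 n hn0 hnsol hnle with h | ⟨j, hj1, hjn, hjd⟩
    · exact Or.inl h
    · exact Or.inr ⟨j, hj1, hjn, (hpm (j+1)).mpr (Or.inr hjd)⟩

/-- for `N = 2·3^m` with `m ≥ 2` and `0 ≤ k ≤ N - 1`, the `(k mod N)`-monomial
minimal solution of `(E_N)` is reducible iff `k` is a multiple of `3` different from `3^m`,
`3^(m-1)` and `5·3^(m-1)`. -/
theorem stmt_2 (m : ℕ) (hm : 2 ≤ m) (k : ℕ) (hk : k ≤ 2 * 3 ^ m - 1) :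
    IsReducibleSol (monoSol (2 * 3 ^ m) (k : ZMod (2 * 3 ^ m))) ↔
      (3 ∣ k ∧ k ≠ 3 ^ m ∧ k ≠ 3 ^ (m - 1) ∧ k ≠ 5 * 3 ^ (m - 1)) := by
  exact stmt_2' m hm k hk
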